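/- Let M be a nonempty finite set of mentions, let G_1, …, G_N be a partition of M into nonempty gold clusters, let k ≥ 1, and for each m ∈ M let π_m : Fin k → ℝ have a strict unique maximizer a(m) ∈ Fin k; let S_u = {m ∈ M : a(m) = u}. Then the relaxed B³ precision converges to the hard B³ precision as the temperature tends to zero from above: lim_{T → 0⁺} [Σ_{u=0}^{k−1} Σ_{v=1}^{N} (Σ_{m ∈ G_v} softmax_u(π_m; T))² / (Σ_{m ∈ M} softmax_u(π_m; T))] / [Σ_{u=0}^{k−1} Σ_{m ∈ M} softmax_u(π_m; T)] = [Σ_{u=0}^{k−1} Σ_{v=1}^{N} |G_v ∩ S_u|² / |S_u|] / [Σ_{u=0}^{k−1} |S_u|], where on the right-hand side any term with |S_u| = 0 is taken to be 0. -/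

import Mathlib

open Filter

/-- The tempered softmax: `softmax π T j = exp(π j / T) / ∑ m, exp(π m / T)`. -/
noncomputable def softmax {k : ℕ} (π : Fin k → ℝ) (T : ℝ) (j : Fin k) : ℝ :=
  Real.exp (π j / T) / ∑ m : Fin k, Real.exp (π m / T)

lemma softmax_pos {k : ℕ} (hk : 1 ≤ k) (π : Fin k → ℝ) (T : ℝ) (j : Fin k) :
    0 < softmax π T j := by
  have : 0 < ∑ m : Fin k, Real.exp (π m / T) :=
    Finset.sum_pos (fun m _ => Real.exp_pos _) (by simp [Finset.univ_nonempty_iff]; exact Fin.pos_iff_nonempty.mp hk)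
  exact div_pos (Real.exp_pos _) this

lemma softmax_sum_one {k : ℕ} (hk : 1 ≤ k) (π : Fin k → ℝ) (T : ℝ) :
    ∑ u : Fin k, softmax π T u = 1 := by
  have h : 0 < ∑ m : Fin k, Real.exp (π m / T) :=
    Finset.sum_pos (fun m _ => Real.exp_pos _) (by simp [Finset.univ_nonempty_iff]; exact Fin.pos_iff_nonempty.mp hk)
  simp only [softmax, ← Finset.sum_div]
  exact div_self h.ne'

lemma exp_div_tendsto_zero {c : ℝ} (hc : c < 0) :
    Tendsto (fun T : ℝ => Real.exp (c / T)) (nhdsWithin 0 (Set.Ioi 0)) (nhds 0) := by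
  apply Real.tendsto_exp_atBot.comp
  have h1 : Tendsto (fun T : ℝ => T⁻¹) (nhdsWithin 0 (Set.Ioi 0)) atTop :=
    tendsto_inv_nhdsGT_zero
  have := h1.const_mul_atTop_of_neg hc
  exact this.congr (fun T => (div_eq_mul_inv c T).symm)

lemma softmax_tendsto {k : ℕ} (hk : 1 ≤ k) (π : Fin k → ℝ) (i : Fin k)
    (hmax : ∀ j : Fin k, j ≠ i → π i > π j) (u : Fin k) :
    Tendsto (fun T : ℝ => softmax π T u) (nhdsWithin 0 (Set.Ioi 0))
      (nhds (if u = i then 1 else 0)) := by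
  have key : ∀ T ∈ Set.Ioi (0:ℝ), softmax π T u =
      Real.exp ((π u - π i) / T) / ∑ j : Fin k, Real.exp ((π j - π i) / T) := by
    intro T hT
    have hsum : 0 < ∑ m : Fin k, Real.exp (π m / T) :=
      Finset.sum_pos (fun m _ => Real.exp_pos _)
        (by simp [Finset.univ_nonempty_iff]; exact Fin.pos_iff_nonempty.mp hk)
    have hd : ∀ x : ℝ, Real.exp ((x - π i)/T) = Real.exp (x/T) / Real.exp (π i / T) := by
      intro x; rw [sub_div, Real.exp_sub]
    simp only [hd, ← Finset.sum_div, softmax]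
    rw [div_div_div_cancel_right₀]
    exact Real.exp_ne_zero _
  have hterm : ∀ j : Fin k, Tendsto (fun T : ℝ => Real.exp ((π j - π i) / T))
      (nhdsWithin 0 (Set.Ioi 0)) (nhds (if j = i then 1 else 0)) := by
    intro j
    by_cases hj : j = i
    · simp only [hj, if_true]
      have : ∀ T : ℝ, Real.exp ((π i - π i)/T) = 1 := by intro T; simp
      simp only [this]
      exact tendsto_const_nhds
    · simp only [hj, if_false]
      exact exp_div_tendsto_zero (sub_neg.mpr (hmax j hj))
  have hden : Tendsto (fun T : ℝ => ∑ j : Fin k, Real.exp ((π j - π i) / T))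
      (nhdsWithin 0 (Set.Ioi 0)) (nhds 1) := by
    have := tendsto_finset_sum Finset.univ (fun j _ => hterm j)
    simpa using this
  have := (hterm u).div hden one_ne_zero
  rw [div_one] at this
  exact this.congr' (eventually_nhdsWithin_of_forall (fun T hT => (key T hT).symm))

lemma sum_softmax_tendsto {k : ℕ} (hk : 1 ≤ k) {M : Type*} [Fintype M] [DecidableEq M]
    (π : M → Fin k → ℝ) (a : M → Fin k)
    (hmax : ∀ m : M, ∀ j : Fin k, j ≠ a m → π m (a m) > π m j)
    (s : Finset M) (u : Fin k) :
    Tendsto (fun T : ℝ => ∑ m ∈ s, softmax (π m) T u) (nhdsWithin 0 (Set.Ioi 0))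
      (nhds ((s.filter (fun m => a m = u)).card : ℝ)) := by
  have h := tendsto_finset_sum s (fun m _ => softmax_tendsto hk (π m) (a m) (hmax m) u)
  have heq : (∑ m ∈ s, if u = a m then (1:ℝ) else 0)
      = ((s.filter (fun m => a m = u)).card : ℝ) := by
    rw [Finset.sum_boole]
    congr 2
    ext m
    simp [eq_comm]
  rwa [heq] at h

/-- The relaxed B³ precision converges, as the temperature `T → 0⁺`, to the hard B³
precision computed from the predicted clusters `S u = {m : a m = u}` (where a summand
with `|S u| = 0` contributes `0`, as division by zero yields `0` in `ℝ`). -/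
theorem relaxed_B3_precision_tendsto_hard
    (M : Type*) [Fintype M] [DecidableEq M] [Nonempty M]
    (N : ℕ) (hN : 1 ≤ N) (G : Fin N → Finset M)
    (hG_nonempty : ∀ v : Fin N, (G v).Nonempty)
    (hG_disjoint : ∀ v w : Fin N, v ≠ w → Disjoint (G v) (G w))
    (hG_cover : Finset.univ.biUnion G = (Finset.univ : Finset M))
    (k : ℕ) (hk : 1 ≤ k)
    (π : M → Fin k → ℝ) (a : M → Fin k)
    (hmax : ∀ m : M, ∀ j : Fin k, j ≠ a m → π m (a m) > π m j) :
    Tendsto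
      (fun T : ℝ =>
        (∑ u : Fin k, ∑ v : Fin N,
            (∑ m ∈ G v, softmax (π m) T u) ^ 2 / ∑ m : M, softmax (π m) T u) /
          ∑ u : Fin k, ∑ m : M, softmax (π m) T u)
      (nhdsWithin 0 (Set.Ioi 0))
      (nhds
        ((∑ u : Fin k, ∑ v : Fin N,
            (((G v ∩ Finset.univ.filter (fun m : M => a m = u)).card : ℝ)) ^ 2 /
              ((Finset.univ.filter (fun m : M => a m = u)).card : ℝ)) /
          ∑ u : Fin k, ((Finset.univ.filter (fun m : M => a m = u)).card : ℝ))) := by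
  set S : Fin k → Finset M := fun u => Finset.univ.filter (fun m : M => a m = u) with hS
  -- denominators equal card M
  have hden : ∀ T : ℝ, ∑ u : Fin k, ∑ m : M, softmax (π m) T u = (Fintype.card M : ℝ) := by
    intro T
    calc ∑ u : Fin k, ∑ m : M, softmax (π m) T u
        = ∑ m : M, ∑ u : Fin k, softmax (π m) T u := Finset.sum_comm
      _ = ∑ _m : M, (1:ℝ) := Finset.sum_congr rfl fun m _ => softmax_sum_one hk (π m) T
      _ = (Fintype.card M : ℝ) := by simp
  have hden' : ∑ u : Fin k, ((S u).card : ℝ) = (Fintype.card M : ℝ) := by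
    rw [← Nat.cast_sum]
    congr 1
    rw [← Finset.card_eq_sum_card_fiberwise (fun m _ => Finset.mem_univ (a m))]
    rfl
  -- intersection card rewriting
  have hinter : ∀ (v : Fin N) (u : Fin k),
      ((G v ∩ S u).card : ℝ) = (((G v).filter (fun m => a m = u)).card : ℝ) := by
    intro v u
    have h : G v ∩ S u = (G v).filter (fun m => a m = u) := by
      ext m; simp [hS]
    rw [h]
  -- tendsto of each summand
  have hsummand : ∀ (u : Fin k) (v : Fin N),
      Tendsto (fun T : ℝ => (∑ m ∈ G v, softmax (π m) T u) ^ 2 / ∑ m : M, softmax (π m) T u)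
        (nhdsWithin 0 (Set.Ioi 0))
        (nhds (((G v ∩ S u).card : ℝ) ^ 2 / ((S u).card : ℝ))) := by
    intro u v
    have hnum := sum_softmax_tendsto hk π a hmax (G v) u
    have hD : Tendsto (fun T : ℝ => ∑ m : M, softmax (π m) T u)
        (nhdsWithin 0 (Set.Ioi 0)) (nhds ((S u).card : ℝ)) := by
      have := sum_softmax_tendsto hk π a hmax Finset.univ u
      simpa [hS] using this
    by_cases hSu : (S u).card = 0
    · -- squeeze to 0
      have hzero : (((G v ∩ S u).card : ℝ) ^ 2 / ((S u).card : ℝ)) = 0 := by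
        have : G v ∩ S u ⊆ S u := Finset.inter_subset_right
        have h2 : (G v ∩ S u).card = 0 :=
          Nat.le_zero.mp (hSu ▸ Finset.card_le_card this)
        simp [h2]
      rw [hzero]
      have hDpos : ∀ T : ℝ, 0 < ∑ m : M, softmax (π m) T u :=
        fun T => Finset.sum_pos (fun m _ => softmax_pos hk (π m) T u) Finset.univ_nonempty
      have hle : ∀ T : ℝ, (∑ m ∈ G v, softmax (π m) T u) ^ 2 / (∑ m : M, softmax (π m) T u)
          ≤ ∑ m : M, softmax (π m) T u := by
        intro T
        rw [div_le_iff₀ (hDpos T)]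
        have h1 : (∑ m ∈ G v, softmax (π m) T u) ≤ ∑ m : M, softmax (π m) T u :=
          Finset.sum_le_sum_of_subset_of_nonneg (Finset.subset_univ _)
            (fun m _ _ => (softmax_pos hk (π m) T u).le)
        have h0 : 0 ≤ ∑ m ∈ G v, softmax (π m) T u :=
          Finset.sum_nonneg (fun m _ => (softmax_pos hk (π m) T u).le)
        calc (∑ m ∈ G v, softmax (π m) T u) ^ 2
            ≤ (∑ m : M, softmax (π m) T u) ^ 2 := pow_le_pow_left₀ h0 h1 2
          _ = _ := sq _
      have hge : ∀ T : ℝ, 0 ≤ (∑ m ∈ G v, softmax (π m) T u) ^ 2 / (∑ m : M, softmax (π m) T u) :=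
        fun T => div_nonneg (sq_nonneg _) (hDpos T).le
      have hD0 : Tendsto (fun T : ℝ => ∑ m : M, softmax (π m) T u)
          (nhdsWithin 0 (Set.Ioi 0)) (nhds 0) := by
        rw [hSu] at hD; simpa using hD
      exact tendsto_of_tendsto_of_tendsto_of_le_of_le tendsto_const_nhds hD0
        (fun T => hge T) (fun T => hle T)
    · have hSu' : ((S u).card : ℝ) ≠ 0 := Nat.cast_ne_zero.mpr hSu
      have := (hnum.pow 2).div hD hSu'
      convert this using 2
      · rfl
      · rw [hinter]
  have hnumall : Tendsto (fun T : ℝ => ∑ u : Fin k, ∑ v : Fin N,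
      (∑ m ∈ G v, softmax (π m) T u) ^ 2 / ∑ m : M, softmax (π m) T u)
      (nhdsWithin 0 (Set.Ioi 0))
      (nhds (∑ u : Fin k, ∑ v : Fin N, ((G v ∩ S u).card : ℝ) ^ 2 / ((S u).card : ℝ))) :=
    tendsto_finset_sum _ (fun u _ => tendsto_finset_sum _ (fun v _ => hsummand u v))
  have final := hnumall.div_const (Fintype.card M : ℝ)
  have hEq : (fun T : ℝ => (∑ u : Fin k, ∑ v : Fin N,
      (∑ m ∈ G v, softmax (π m) T u) ^ 2 / ∑ m : M, softmax (π m) T u) / (Fintype.card M : ℝ))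
      =ᶠ[nhdsWithin (0:ℝ) (Set.Ioi 0)]
      (fun T : ℝ => (∑ u : Fin k, ∑ v : Fin N,
      (∑ m ∈ G v, softmax (π m) T u) ^ 2 / ∑ m : M, softmax (π m) T u) /
        ∑ u : Fin k, ∑ m : M, softmax (π m) T u) :=
    Eventually.of_forall (fun T => by simp only [hden T])
  have key := Tendsto.congr' hEq final
  simp only [hS] at key hden'
  rw [hden']
  exact key
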